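/- Let A be an invertible symmetric n₁×n₁ real matrix, C an invertible symmetric n₂×n₂ real matrix, B a g×n₁ real matrix and D a g×n₂ real matrix. Consider the symmetric (n₁+g+g+n₂)×(n₁+g+g+n₂) block matrix M = [[A, Bᵀ, 0, 0],[B, B·A⁻¹·Bᵀ, -I, 0],[0, -I, D·C⁻¹·Dᵀ, D],[0, 0, Dᵀ, C]]. Then the number of positive eigenvalues of M, counted with multiplicity, equals σ₊(A) + σ₊(C) + g, and the number of negative eigenvalues of M equals σ₋(A) + σ₋(C) + g. -/

import Mathlib

open Matrix

namespace SigAux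

variable {n : Type*} [Fintype n] [DecidableEq n]

omit [DecidableEq n] in
lemma sum_dotProduct' {ι : Type*} (s : Finset ι) (f : ι → n → ℝ) (w : n → ℝ) :
    (∑ i ∈ s, f i) ⬝ᵥ w = ∑ i ∈ s, f i ⬝ᵥ w := by
  simp only [dotProduct, Finset.sum_apply, Finset.sum_mul]
  exact Finset.sum_comm

omit [DecidableEq n] in
lemma dotProduct_sum' {ι : Type*} (s : Finset ι) (w : n → ℝ) (f : ι → n → ℝ) :
    w ⬝ᵥ (∑ i ∈ s, f i) = ∑ i ∈ s, w ⬝ᵥ f i := by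
  simp only [dotProduct, Finset.sum_apply, Finset.mul_sum]
  exact Finset.sum_comm

structure Good (M : Matrix n n ℝ) (v : n → n → ℝ) (μ : n → ℝ) : Prop where
  eig : ∀ j, M *ᵥ v j = μ j • v j
  orth : ∀ i j, v i ⬝ᵥ v j = (if i = j then 1 else 0)

lemma Good.span_rep {M : Matrix n n ℝ} {v : n → n → ℝ} {μ : n → ℝ}
    (hg : Good M v μ) (p : n → Prop) [DecidablePred p]
    {x : n → ℝ} (hx : x ∈ Submodule.span ℝ (Set.range fun i : {i // p i} => v i)) :
    ∃ c : {i // p i} → ℝ, x = ∑ i, c i • v i ∧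
      x ⬝ᵥ M *ᵥ x = ∑ i : {i // p i}, μ i * c i ^ 2 := by
  rw [Submodule.mem_span_range_iff_exists_fun] at hx
  obtain ⟨c, hc⟩ := hx
  refine ⟨c, hc.symm, ?_⟩
  subst hc
  have hMv : M *ᵥ (∑ i : {i // p i}, c i • v i) = ∑ i : {i // p i}, (c i * μ i) • v i := by
    rw [show M *ᵥ (∑ i : {i // p i}, c i • v i) = M.mulVecLin (∑ i : {i // p i}, c i • v i) from rfl,
      map_sum]
    refine Finset.sum_congr rfl fun i _ => ?_
    simp [mulVecLin_apply, mulVec_smul, hg.eig, smul_smul]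
  rw [hMv, dotProduct_sum']
  refine Finset.sum_congr rfl fun i _ => ?_
  rw [dotProduct_smul, sum_dotProduct']
  simp only [smul_dotProduct, hg.orth, smul_eq_mul]
  rw [Finset.sum_eq_single i]
  · simp; ring
  · intro j _ hj
    have : (j : n) ≠ (i : n) := fun h => hj (Subtype.ext h)
    simp [this]
  · simp

lemma Good.linearIndependent {M : Matrix n n ℝ} {v : n → n → ℝ} {μ : n → ℝ}
    (hg : Good M v μ) (p : n → Prop) [DecidablePred p] :
    LinearIndependent ℝ (fun i : {i // p i} => v i) := by
  rw [Fintype.linearIndependent_iff]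
  intro c hc j
  have := congrArg (fun w => w ⬝ᵥ v j) hc
  simp only [zero_dotProduct] at this
  rw [sum_dotProduct'] at this
  simp only [smul_dotProduct, hg.orth, smul_eq_mul] at this
  rw [Finset.sum_eq_single j] at this
  · simpa using this
  · intro b _ hb
    have : (b : n) ≠ (j : n) := fun h => hb (Subtype.ext h)
    simp [this]
  · simp

lemma Good.span_finrank {M : Matrix n n ℝ} {v : n → n → ℝ} {μ : n → ℝ}
    (hg : Good M v μ) (p : n → Prop) [DecidablePred p] :
    Module.finrank ℝ (Submodule.span ℝ (Set.range fun i : {i // p i} => v i))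
      = Fintype.card {i // p i} :=
  finrank_span_eq_card (hg.linearIndependent p)

lemma count_pos_le {M N : Matrix n n ℝ} {v w : n → n → ℝ} {μ ν : n → ℝ}
    (hgM : Good M v μ) (hgN : Good N w ν)
    (e : (n → ℝ) ≃ₗ[ℝ] (n → ℝ)) (he : ∀ x, x ⬝ᵥ N *ᵥ x = (e x) ⬝ᵥ M *ᵥ (e x)) :
    Fintype.card {i // 0 < ν i} ≤ Fintype.card {i // 0 < μ i} := by
  by_contra hlt
  push_neg at hlt
  set W₀ := Submodule.span ℝ (Set.range fun i : {i // 0 < ν i} => w i) with hW₀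
  set W₁ := W₀.map (e : (n → ℝ) →ₗ[ℝ] (n → ℝ)) with hW₁
  set W₂ := Submodule.span ℝ (Set.range fun i : {i // ¬ 0 < μ i} => v i) with hW₂
  have hr₁ : Module.finrank ℝ W₁ = Fintype.card {i // 0 < ν i} := by
    rw [hW₁, LinearEquiv.finrank_map_eq]
    exact hgN.span_finrank _
  have hr₂ : Module.finrank ℝ W₂ = Fintype.card n - Fintype.card {i // 0 < μ i} := by
    rw [hgM.span_finrank _, Fintype.card_subtype_compl]
  have hsup : Module.finrank ℝ ↥(W₁ ⊔ W₂) ≤ Fintype.card n := by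
    have := Submodule.finrank_le (W₁ ⊔ W₂)
    rwa [Module.finrank_pi] at this
  have hinf : 0 < Module.finrank ℝ ↥(W₁ ⊓ W₂) := by
    have h := Submodule.finrank_sup_add_finrank_inf_eq W₁ W₂
    have hle : Fintype.card {i // 0 < μ i} ≤ Fintype.card n := Fintype.card_subtype_le _
    omega
  have : Nontrivial ↥(W₁ ⊓ W₂) := Module.nontrivial_of_finrank_pos (R := ℝ) hinf
  obtain ⟨⟨x, hx⟩, hxne⟩ := exists_ne (0 : ↥(W₁ ⊓ W₂))
  have hxne' : x ≠ 0 := fun h => hxne (Subtype.ext h)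
  obtain ⟨y, hy, hyx⟩ := hW₁ ▸ hx.1
  have hyne : y ≠ 0 := by
    rintro rfl
    exact hxne' (by simp [← hyx])
  obtain ⟨c, hcrep, hcval⟩ := hgN.span_rep _ hy
  have hpos : 0 < y ⬝ᵥ N *ᵥ y := by
    rw [hcval]
    have hcne : ∃ i, c i ≠ 0 := by
      by_contra hall
      push_neg at hall
      exact hyne (by simp [hcrep, hall])
    obtain ⟨i₀, hi₀⟩ := hcne
    refine Finset.sum_pos' (fun i _ => ?_) ⟨i₀, Finset.mem_univ _, ?_⟩
    · have := i.2
      positivity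
    · have := i₀.2
      positivity
  obtain ⟨d, hdrep, hdval⟩ := hgM.span_rep _ hx.2
  have hnonpos : x ⬝ᵥ M *ᵥ x ≤ 0 := by
    rw [hdval]
    refine Finset.sum_nonpos fun i _ => mul_nonpos_iff.mpr (Or.inr ⟨?_, by positivity⟩)
    have := i.2
    linarith [this, not_lt.mp this]
  rw [he y] at hpos
  rw [show (e : (n → ℝ) →ₗ[ℝ] (n → ℝ)) y = e y from rfl] at hyx
  rw [hyx] at hpos
  exact absurd (lt_of_lt_of_le hpos hnonpos) (lt_irrefl 0)

lemma count_pos_eq {M N : Matrix n n ℝ} {v w : n → n → ℝ} {μ ν : n → ℝ}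
    (hgM : Good M v μ) (hgN : Good N w ν)
    (e : (n → ℝ) ≃ₗ[ℝ] (n → ℝ)) (he : ∀ x, x ⬝ᵥ N *ᵥ x = (e x) ⬝ᵥ M *ᵥ (e x)) :
    Fintype.card {i // 0 < ν i} = Fintype.card {i // 0 < μ i} := by
  refine le_antisymm (count_pos_le hgM hgN e he) (count_pos_le hgN hgM e.symm fun x => ?_)
  have := he (e.symm x)
  simp only [LinearEquiv.apply_symm_apply] at this
  exact this.symm

lemma Good.neg {M : Matrix n n ℝ} {v : n → n → ℝ} {μ : n → ℝ} (hg : Good M v μ) :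
    Good (-M) v (-μ) := by
  refine ⟨fun j => ?_, hg.orth⟩
  rw [neg_mulVec, hg.eig]
  simp

lemma count_neg_eq {M N : Matrix n n ℝ} {v w : n → n → ℝ} {μ ν : n → ℝ}
    (hgM : Good M v μ) (hgN : Good N w ν)
    (e : (n → ℝ) ≃ₗ[ℝ] (n → ℝ)) (he : ∀ x, x ⬝ᵥ N *ᵥ x = (e x) ⬝ᵥ M *ᵥ (e x)) :
    Fintype.card {i // ν i < 0} = Fintype.card {i // μ i < 0} := by
  have h := count_pos_eq hgM.neg hgN.neg e (fun x => by
    rw [neg_mulVec, neg_mulVec, dotProduct_neg, dotProduct_neg, he x])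
  have e₁ : {i // 0 < (-ν) i} ≃ {i // ν i < 0} := Equiv.subtypeEquivRight fun i => by
    simp [neg_pos]
  have e₂ : {i // 0 < (-μ) i} ≃ {i // μ i < 0} := Equiv.subtypeEquivRight fun i => by
    simp [neg_pos]
  rw [← Fintype.card_congr e₁, ← Fintype.card_congr e₂, h]

lemma card_subtype_sum {α β : Type*} [Fintype α] [Fintype β] (p : α ⊕ β → Prop)
    [DecidablePred p] :
    Fintype.card {i // p i}
      = Fintype.card {a // p (Sum.inl a)} + Fintype.card {b // p (Sum.inr b)} := by
  rw [← Fintype.card_sum]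
  refine Fintype.card_congr ⟨fun x => ?_, fun x => ?_, ?_, ?_⟩
  · obtain ⟨(a | b), h⟩ := x
    · exact Sum.inl ⟨a, h⟩
    · exact Sum.inr ⟨b, h⟩
  · obtain (⟨a, h⟩ | ⟨b, h⟩) := x
    · exact ⟨Sum.inl a, h⟩
    · exact ⟨Sum.inr b, h⟩
  · rintro ⟨(a | b), h⟩ <;> rfl
  · rintro (⟨a, h⟩ | ⟨b, h⟩) <;> rfl

lemma good_of_isHermitian {n : Type*} [Fintype n] [DecidableEq n]
    {M : Matrix n n ℝ} (hM : M.IsHermitian) :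
    Good M (fun j => ⇑(hM.eigenvectorBasis j)) hM.eigenvalues := by
  refine ⟨fun j => hM.mulVec_eigenvectorBasis j, fun i j => ?_⟩
  have h := (orthonormal_iff_ite.mp hM.eigenvectorBasis.orthonormal) i j
  simp only [PiLp.inner_apply, RCLike.inner_apply, starRingEnd_apply, star_trivial] at h
  simpa [dotProduct, mul_comm] using h

lemma Good.fromBlocks {m n : Type*} [Fintype m] [DecidableEq m] [Fintype n] [DecidableEq n]
    {M₁ : Matrix m m ℝ} {M₂ : Matrix n n ℝ} {v₁ : m → m → ℝ} {μ₁ : m → ℝ}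
    {v₂ : n → n → ℝ} {μ₂ : n → ℝ} (h₁ : Good M₁ v₁ μ₁) (h₂ : Good M₂ v₂ μ₂) :
    Good (Matrix.fromBlocks M₁ 0 0 M₂)
      (Sum.elim (fun i => Sum.elim (v₁ i) 0) (fun j => Sum.elim 0 (v₂ j)))
      (Sum.elim μ₁ μ₂) := by
  constructor
  · rintro (j | j) <;>
      [skip; skip] <;>
      · funext k
        rcases k with k | k <;>
          simp [fromBlocks_mulVec, Sum.elim_comp_inl, Sum.elim_comp_inr, mulVec_zero,
            h₁.eig, h₂.eig, Pi.smul_apply]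
  · rintro (i | i) (j | j) <;>
      simp [sumElim_dotProduct_sumElim, h₁.orth, h₂.orth]

lemma good_one {n : Type*} [Fintype n] [DecidableEq n] :
    Good (1 : Matrix n n ℝ) (fun i => Pi.single i 1) (fun _ => 1) := by
  constructor
  · intro j; rw [one_mulVec, one_smul]
  · intro i j
    rw [dotProduct_single, mul_one, Pi.single_apply]
    simp [eq_comm]

lemma good_neg_one {n : Type*} [Fintype n] [DecidableEq n] :
    Good (-1 : Matrix n n ℝ) (fun i => Pi.single i 1) (fun _ => -1) := by
  have h := (good_one (n := n)).neg
  simpa [Pi.neg_def] using h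

variable {α β δ : Type*} [Fintype α] [DecidableEq α] [Fintype β] [DecidableEq β]
  [Fintype δ] [DecidableEq δ]

noncomputable def bigR (c : ℝ) (P : Matrix α β ℝ) (Q : Matrix δ β ℝ) :
    Matrix (α ⊕ (β ⊕ (β ⊕ δ))) (α ⊕ (β ⊕ (β ⊕ δ))) ℝ :=
  fromBlocks 1 (fromCols P 0) 0
    (fromBlocks (c • 1) (fromCols (-(c • 1)) 0) (fromRows (c • 1) 0)
      (fromBlocks (c • 1) 0 Q 1))

noncomputable def bigR' (c : ℝ) (P : Matrix α β ℝ) (Q : Matrix δ β ℝ) :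
    Matrix (α ⊕ (β ⊕ (β ⊕ δ))) (α ⊕ (β ⊕ (β ⊕ δ))) ℝ :=
  fromBlocks 1 (fromCols (-(c • P)) (fromCols (-(c • P)) 0)) 0
    (fromBlocks (c • 1) (fromCols (c • 1) 0) (fromRows (-(c • 1)) (c • Q))
      (fromBlocks (c • 1) 0 (-(c • Q)) 1))

lemma fromColumns_add' {m n₁ n₂ : Type*} (A₁ B₁ : Matrix m n₁ ℝ) (A₂ B₂ : Matrix m n₂ ℝ) :
    fromCols A₁ A₂ + fromCols B₁ B₂ = fromCols (A₁ + B₁) (A₂ + B₂) := by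
  funext i j
  rcases j with j | j <;> simp

lemma fromRows_add' {m₁ m₂ n : Type*} (A₁ B₁ : Matrix m₁ n ℝ) (A₂ B₂ : Matrix m₂ n ℝ) :
    fromRows A₁ A₂ + fromRows B₁ B₂ = fromRows (A₁ + B₁) (A₂ + B₂) := by
  funext i j
  rcases i with i | i <;> simp

lemma smul_fromColumns' {m n₁ n₂ : Type*} (c : ℝ) (A₁ : Matrix m n₁ ℝ) (A₂ : Matrix m n₂ ℝ) :
    c • fromCols A₁ A₂ = fromCols (c • A₁) (c • A₂) := by
  funext i j
  rcases j with j | j <;> simp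

lemma smul_fromRows' {m₁ m₂ n : Type*} (c : ℝ) (A₁ : Matrix m₁ n ℝ) (A₂ : Matrix m₂ n ℝ) :
    c • fromRows A₁ A₂ = fromRows (c • A₁) (c • A₂) := by
  funext i j
  rcases i with i | i <;> simp

lemma fromColumns_fromRows_zero {m₁ m₂ n₁ n₂ : Type*} (X : Matrix m₁ n₁ ℝ) (Y : Matrix m₂ n₁ ℝ) :
    fromCols (fromRows X Y) (0 : Matrix (m₁ ⊕ m₂) n₂ ℝ) = fromBlocks X 0 Y 0 := by
  funext i j
  rcases i with i | i <;> rcases j with j | j <;> simp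

lemma half_add_half' {m n : Type*} (X : Matrix m n ℝ) : (1/2 : ℝ) • X + (1/2 : ℝ) • X = X := by
  module

lemma neg_half_add_neg_half' {m n : Type*} (X : Matrix m n ℝ) :
    -((1/2 : ℝ) • X) + -((1/2 : ℝ) • X) = -X := by
  module

lemma neg_half_add_self' {m n : Type*} (X : Matrix m n ℝ) :
    -((1/2 : ℝ) • X) + X = (1/2 : ℝ) • X := by
  module

lemma bigR_mul_bigR' (c : ℝ) (hc : c * c = 1 / 2) (P : Matrix α β ℝ) (Q : Matrix δ β ℝ) :
    bigR c P Q * bigR' c P Q = 1 := by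
  rw [bigR, bigR',
    show (1 : Matrix (α ⊕ (β ⊕ (β ⊕ δ))) (α ⊕ (β ⊕ (β ⊕ δ))) ℝ) = fromBlocks 1 0 0 1
      from fromBlocks_one.symm]
  rw [fromBlocks_multiply]
  simp only [Matrix.one_mul, Matrix.mul_one, Matrix.mul_zero, Matrix.zero_mul, add_zero, zero_add,
    fromCols_mul_fromBlocks, fromBlocks_mul_fromRows, fromRows_mul_fromCols,
    fromCols_mul_fromRows, mul_fromCols, fromRows_mul, fromBlocks_multiply,
    Matrix.smul_mul, Matrix.mul_smul, smul_smul, hc, fromColumns_add', fromRows_add',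
    Matrix.fromBlocks_add, Matrix.neg_mul, Matrix.mul_neg, smul_neg, neg_smul, neg_neg,
    smul_zero, neg_zero, add_neg_cancel, neg_add_cancel, smul_fromColumns', smul_fromRows',
    fromColumns_fromRows_zero, fromCols_zero, fromRows_zero, ← add_smul]
  norm_num [Matrix.fromBlocks_add, fromColumns_add', fromRows_add', fromCols_zero,
    fromRows_zero, fromBlocks_one, half_add_half', neg_half_add_neg_half', neg_half_add_self',
    fromColumns_fromRows_zero, add_neg_cancel, neg_add_cancel]

lemma bigR'_mul_bigR (c : ℝ) (hc : c * c = 1 / 2) (P : Matrix α β ℝ) (Q : Matrix δ β ℝ) :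
    bigR' c P Q * bigR c P Q = 1 := by
  rw [bigR, bigR',
    show (1 : Matrix (α ⊕ (β ⊕ (β ⊕ δ))) (α ⊕ (β ⊕ (β ⊕ δ))) ℝ) = fromBlocks 1 0 0 1
      from fromBlocks_one.symm]
  rw [fromBlocks_multiply]
  simp only [Matrix.one_mul, Matrix.mul_one, Matrix.mul_zero, Matrix.zero_mul, add_zero, zero_add,
    fromCols_mul_fromBlocks, fromBlocks_mul_fromRows, fromRows_mul_fromCols,
    fromCols_mul_fromRows, mul_fromCols, fromRows_mul, fromBlocks_multiply,
    Matrix.smul_mul, Matrix.mul_smul, smul_smul, hc, fromColumns_add', fromRows_add',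
    Matrix.fromBlocks_add, Matrix.neg_mul, Matrix.mul_neg, smul_neg, neg_smul, neg_neg,
    smul_zero, neg_zero, add_neg_cancel, neg_add_cancel, smul_fromColumns', smul_fromRows',
    fromColumns_fromRows_zero, fromCols_zero, fromRows_zero, ← add_smul]
  norm_num [Matrix.fromBlocks_add, fromColumns_add', fromRows_add', fromCols_zero,
    fromRows_zero, fromBlocks_one, half_add_half', neg_half_add_neg_half', neg_half_add_self',
    fromColumns_fromRows_zero, add_neg_cancel, neg_add_cancel]

lemma transpose_bigR_mul_K_mul_bigR (c : ℝ) (hc : c * c = 1 / 2)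
    (A : Matrix α α ℝ) (hA : Aᵀ = A) (hAinv : IsUnit A.det)
    (C : Matrix δ δ ℝ) (hC : Cᵀ = C) (hCinv : IsUnit C.det)
    (B : Matrix β α ℝ) (D : Matrix β δ ℝ) :
    (bigR c (A⁻¹ * Bᵀ) (C⁻¹ * Dᵀ))ᵀ
        * fromBlocks A 0 0 (fromBlocks 1 0 0 (fromBlocks (-1) 0 0 C))
        * bigR c (A⁻¹ * Bᵀ) (C⁻¹ * Dᵀ)
      = fromBlocks A (fromCols Bᵀ 0) (fromRows B 0)
          (fromBlocks (B * A⁻¹ * Bᵀ) (fromCols (-1) 0) (fromRows (-1) 0)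
            (fromBlocks (D * C⁻¹ * Dᵀ) D Dᵀ C)) := by
  have hPt : (A⁻¹ * Bᵀ)ᵀ = B * A⁻¹ := by
    rw [transpose_mul, transpose_nonsing_inv, hA, transpose_transpose]
  have hQt : (C⁻¹ * Dᵀ)ᵀ = D * C⁻¹ := by
    rw [transpose_mul, transpose_nonsing_inv, hC, transpose_transpose]
  have hAP : A * (A⁻¹ * Bᵀ) = Bᵀ := A.mul_nonsing_inv_cancel_left Bᵀ hAinv
  have hCQ : C * (C⁻¹ * Dᵀ) = Dᵀ := C.mul_nonsing_inv_cancel_left Dᵀ hCinv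
  have hBAA : B * A⁻¹ * A = B := by
    rw [Matrix.mul_assoc, Matrix.nonsing_inv_mul A hAinv, Matrix.mul_one]
  have hDCC : D * C⁻¹ * C = D := by
    rw [Matrix.mul_assoc, Matrix.nonsing_inv_mul C hCinv, Matrix.mul_one]
  rw [bigR]
  simp only [fromBlocks_transpose, transpose_fromCols, transpose_fromRows,
    transpose_one, transpose_zero, transpose_neg, transpose_smul, hPt, hQt]
  rw [fromBlocks_multiply, fromBlocks_multiply]
  simp only [Matrix.one_mul, Matrix.mul_one, Matrix.mul_zero, Matrix.zero_mul, add_zero, zero_add,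
    fromCols_mul_fromBlocks, fromBlocks_mul_fromRows, fromRows_mul_fromCols,
    fromCols_mul_fromRows, mul_fromCols, fromRows_mul, fromBlocks_multiply,
    Matrix.smul_mul, Matrix.mul_smul, smul_smul, hc, fromColumns_add', fromRows_add',
    Matrix.fromBlocks_add, Matrix.neg_mul, Matrix.mul_neg, smul_neg, neg_smul, neg_neg,
    smul_zero, neg_zero, add_neg_cancel, neg_add_cancel, smul_fromColumns', smul_fromRows',
    fromColumns_fromRows_zero, fromCols_zero, fromRows_zero, ← add_smul,
    hAP, hCQ, hBAA, hDCC, half_add_half', neg_half_add_neg_half', neg_half_add_self']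
  norm_num [Matrix.fromBlocks_add, fromColumns_add', fromRows_add', fromCols_zero,
    fromRows_zero, fromBlocks_one, half_add_half', neg_half_add_neg_half', neg_half_add_self',
    fromColumns_fromRows_zero, add_neg_cancel, neg_add_cancel]
  exact ⟨(Matrix.mul_assoc B A⁻¹ Bᵀ).symm, (Matrix.mul_assoc D C⁻¹ Dᵀ).symm⟩

end SigAux

open SigAux in
/-- The signature part of Proposition 3.8 ([CL, Proposition 13]): the linking matrix
`M = [[A, Bᵀ, 0, 0], [B, B·A⁻¹·Bᵀ, -I, 0], [0, -I, D·C⁻¹·Dᵀ, D], [0, 0, Dᵀ, C]]` of the glued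
cobordism has exactly `σ₊(A) + σ₊(C) + g` positive and `σ₋(A) + σ₋(C) + g` negative
eigenvalues, counted with multiplicity. -/
theorem signature_glued_linking_matrix (n₁ n₂ g : ℕ)
    (A : Matrix (Fin n₁) (Fin n₁) ℝ) (hA : A.IsHermitian) (hAinv : IsUnit A.det)
    (C : Matrix (Fin n₂) (Fin n₂) ℝ) (hC : C.IsHermitian) (hCinv : IsUnit C.det)
    (B : Matrix (Fin g) (Fin n₁) ℝ) (D : Matrix (Fin g) (Fin n₂) ℝ)
    (M : Matrix (Fin n₁ ⊕ (Fin g ⊕ (Fin g ⊕ Fin n₂)))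
      (Fin n₁ ⊕ (Fin g ⊕ (Fin g ⊕ Fin n₂))) ℝ)
    (hMdef : M = Matrix.fromBlocks A
      (Matrix.fromCols Bᵀ (Matrix.fromCols 0 0))
      (Matrix.fromRows B (Matrix.fromRows 0 0))
      (Matrix.fromBlocks (B * A⁻¹ * Bᵀ)
        (Matrix.fromCols (-1) 0)
        (Matrix.fromRows (-1) 0)
        (Matrix.fromBlocks (D * C⁻¹ * Dᵀ) D Dᵀ C)))
    (hM : M.IsHermitian) :
    Fintype.card {i // 0 < hM.eigenvalues i}
      = Fintype.card {i // 0 < hA.eigenvalues i}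
        + Fintype.card {i // 0 < hC.eigenvalues i} + g ∧
    Fintype.card {i // hM.eigenvalues i < 0}
      = Fintype.card {i // hA.eigenvalues i < 0}
        + Fintype.card {i // hC.eigenvalues i < 0} + g := by
  classical
  set c : ℝ := (Real.sqrt 2)⁻¹ with hcdef
  have hc : c * c = 1 / 2 := by
    rw [hcdef, ← mul_inv]
    rw [Real.mul_self_sqrt (by norm_num)]
    norm_num
  set R := bigR c (A⁻¹ * Bᵀ) (C⁻¹ * Dᵀ) with hRdef
  set K := fromBlocks A 0 0
    (fromBlocks (1 : Matrix (Fin g) (Fin g) ℝ) 0 0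
      (fromBlocks (-1 : Matrix (Fin g) (Fin g) ℝ) 0 0 C)) with hKdef
  have hAt : Aᵀ = A := hA
  have hCt : Cᵀ = C := hC
  have hMK : M = Rᵀ * K * R := by
    rw [hMdef, hRdef, hKdef, transpose_bigR_mul_K_mul_bigR c hc A hAt hAinv C hCt hCinv B D]
    rw [fromCols_zero, fromRows_zero]
  have hinv : Invertible R := ⟨bigR' c (A⁻¹ * Bᵀ) (C⁻¹ * Dᵀ),
    bigR'_mul_bigR c hc _ _, bigR_mul_bigR' c hc _ _⟩
  set e := R.toLinearEquiv' hinv with hedef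
  have he : ∀ x, x ⬝ᵥ M *ᵥ x = (e x) ⬝ᵥ K *ᵥ (e x) := by
    intro x
    have hex : e x = R *ᵥ x := rfl
    rw [hex, hMK, ← mulVec_mulVec, ← mulVec_mulVec, dotProduct_mulVec, vecMul_transpose]
  have goodK := Good.fromBlocks (good_of_isHermitian hA)
      (Good.fromBlocks (good_one (n := Fin g))
        (Good.fromBlocks (good_neg_one (n := Fin g)) (good_of_isHermitian hC)))
  rw [← hKdef] at goodK
  have goodM := good_of_isHermitian hM
  have hpos := count_pos_eq goodK goodM e he
  have hneg := count_neg_eq goodK goodM e he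
  have hgtrue : Fintype.card {_i : Fin g // (0:ℝ) < 1} = g := by
    rw [Fintype.card_congr (Equiv.subtypeUnivEquiv (fun _ => one_pos)), Fintype.card_fin]
  have hgfalse : Fintype.card {_i : Fin g // (0:ℝ) < -1} = 0 :=
    Fintype.card_eq_zero_iff.mpr ⟨fun x => absurd x.2 (by norm_num)⟩
  have hgtrue' : Fintype.card {_i : Fin g // (-1:ℝ) < 0} = g := by
    rw [Fintype.card_congr (Equiv.subtypeUnivEquiv (fun _ => by norm_num)), Fintype.card_fin]
  have hgfalse' : Fintype.card {_i : Fin g // (1:ℝ) < 0} = 0 :=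
    Fintype.card_eq_zero_iff.mpr ⟨fun x => absurd x.2 (by norm_num)⟩
  constructor
  · rw [hpos, card_subtype_sum, card_subtype_sum, card_subtype_sum]
    simp only [Sum.elim_inl, Sum.elim_inr]
    erw [hgtrue, hgfalse]
    rw [zero_add, ← add_assoc]
    exact add_right_comm _ _ _
  · rw [hneg, card_subtype_sum, card_subtype_sum, card_subtype_sum]
    simp only [Sum.elim_inl, Sum.elim_inr]
    erw [hgtrue', hgfalse']
    rw [zero_add, ← add_assoc]
    exact add_right_comm _ _ _
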